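/- Let n ≥ 3 and let S_n = P_{n-1} ∨ K_1 be the shell graph on n vertices with apex c and path P_{n-1} = (v_1, …, v_{n-1}). For S = {c} ∪ A with A ⊆ V(P_{n-1}), the set S is a mutual-visibility set of S_n if and only if |A| ≤ 2 and the distance in the path P_{n-1} between any two vertices of A is at most 2. -/

import Mathlib

open SimpleGraph Polynomial

/-- Two vertices `u` and `v` are `X`-visible in `G` if some shortest `u`–`v` path
has no internal vertex in `X`, i.e. its support meets `X` only possibly in `{u, v}`. -/
def XVisible {V : Type*} (G : SimpleGraph V) (X : Set V) (u v : V) : Prop :=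
  ∃ p : G.Walk u v, p.IsPath ∧ p.length = G.dist u v ∧
    ∀ w ∈ p.support, w ∈ X → w = u ∨ w = v

/-- `X` is a mutual-visibility set of `G` if every pair of vertices of `X` is `X`-visible. -/
def MutualVisibilitySet {V : Type*} (G : SimpleGraph V) (X : Set V) : Prop :=
  ∀ u ∈ X, ∀ v ∈ X, XVisible G X u v

open Classical in
/-- The visibility polynomial: `∑ m_k x^k` where `m_k` is the number of
mutual-visibility sets of cardinality `k`. -/
noncomputable def visPoly {V : Type*} [Fintype V] (G : SimpleGraph V) : Polynomial ℕ :=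
  ∑ S ∈ Finset.univ.powerset.filter (fun S : Finset V => MutualVisibilitySet G ↑S),
    Polynomial.X ^ S.card

/-- The wheel graph with rim `cycleGraph m` (on `some`-vertices) and hub `none`. -/
def wheelGraph (m : ℕ) : SimpleGraph (Option (Fin m)) :=
  SimpleGraph.fromRel (fun u v =>
    (u = none ∧ v ≠ none) ∨
    ∃ i j : Fin m, u = some i ∧ v = some j ∧ (SimpleGraph.cycleGraph m).Adj i j)

/-- The shell graph with path `pathGraph m` (on `some`-vertices) and apex `none`. -/
def shellGraph (m : ℕ) : SimpleGraph (Option (Fin m)) :=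
  SimpleGraph.fromRel (fun u v =>
    (u = none ∧ v ≠ none) ∨
    ∃ i j : Fin m, u = some i ∧ v = some j ∧ (SimpleGraph.pathGraph m).Adj i j)

/-- The bow graph: apex `none` joined to two disjoint paths of `a` and `b` vertices. -/
def bowGraph (a b : ℕ) : SimpleGraph (Option (Fin a ⊕ Fin b)) :=
  SimpleGraph.fromRel (fun u v =>
    (u = none ∧ v ≠ none) ∨
    (∃ i j : Fin a, u = some (Sum.inl i) ∧ v = some (Sum.inl j) ∧ (SimpleGraph.pathGraph a).Adj i j) ∨
    (∃ i j : Fin b, u = some (Sum.inr i) ∧ v = some (Sum.inr j) ∧ (SimpleGraph.pathGraph b).Adj i j))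

/-- The friendship graph: center `none`; the `i`-th triangle has the two
noncentral vertices `some (i, 0)` and `some (i, 1)`. -/
def friendshipGraph (n : ℕ) : SimpleGraph (Option (Fin n × Fin 2)) :=
  SimpleGraph.fromRel (fun u v =>
    (u = none ∧ v ≠ none) ∨
    ∃ (i : Fin n) (x y : Fin 2), u = some (i, x) ∧ v = some (i, y) ∧ x ≠ y)

/-- The helm graph: a copy of the wheel (the `Sum.inl`-vertices) together with a
pendant vertex `Sum.inr k` attached to each rim vertex `Sum.inl (some k)`. -/
def helmGraph (m : ℕ) : SimpleGraph (Option (Fin m) ⊕ Fin m) :=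
  SimpleGraph.fromRel (fun u v =>
    (∃ x y : Option (Fin m), u = Sum.inl x ∧ v = Sum.inl y ∧ (wheelGraph m).Adj x y) ∨
    (∃ k : Fin m, u = Sum.inl (some k) ∧ v = Sum.inr k))

/-- `W` is a `c_Q`-visible set: `W ⊆ V \ Q`, every pair of vertices of `W` is
`Q`-visible, and `{u, w}` is `Q`-visible for all `u ∈ Q`, `w ∈ W`. -/
def CQVisible {V : Type*} (G : SimpleGraph V) (Q W : Set V) : Prop :=
  W ⊆ Qᶜ ∧ (∀ u ∈ W, ∀ v ∈ W, XVisible G Q u v) ∧ (∀ u ∈ Q, ∀ w ∈ W, XVisible G Q u w)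

/-- An absolute `c_Q`-visible set: a `c_Q`-visible set for which `Q` is moreover a
mutual-visibility set of `G`. -/
def AbsoluteCQVisible {V : Type*} (G : SimpleGraph V) (Q W : Set V) : Prop :=
  CQVisible G Q W ∧ MutualVisibilitySet G Q

lemma shell_adj_none {m : ℕ} (i : Fin m) : (shellGraph m).Adj none (some i) := by
  simp [shellGraph, SimpleGraph.fromRel_adj]

lemma shell_adj_some {m : ℕ} {i j : Fin m} :
    (shellGraph m).Adj (some i) (some j) ↔ (SimpleGraph.pathGraph m).Adj i j := by
  rw [shellGraph, SimpleGraph.fromRel_adj]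
  constructor
  · rintro ⟨hne, (⟨h, -⟩ | ⟨a, b, ha, hb, hadj⟩) | (⟨h, -⟩ | ⟨a, b, ha, hb, hadj⟩)⟩
    · exact absurd h (by simp)
    · obtain rfl : i = a := by injection ha
      obtain rfl : j = b := by injection hb
      exact hadj
    · exact absurd h (by simp)
    · obtain rfl : j = a := by injection ha
      obtain rfl : i = b := by injection hb
      exact hadj.symm
  · intro h
    exact ⟨by simpa using h.ne, Or.inl (Or.inr ⟨i, j, rfl, rfl, h⟩)⟩

lemma shell_dist_some {m : ℕ} {i j : Fin m} (hne : i ≠ j)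
    (hnadj : ¬ (SimpleGraph.pathGraph m).Adj i j) :
    (shellGraph m).dist (some i) (some j) = 2 := by
  have hw : (shellGraph m).dist (some i) (some j) ≤ 2 :=
    SimpleGraph.dist_le (Walk.cons (shell_adj_none i).symm (Walk.cons (shell_adj_none j) Walk.nil))
  have h0 : (shellGraph m).dist (some i) (some j) ≠ 0 := by
    rw [SimpleGraph.dist_ne_zero_iff_ne_and_reachable]
    exact ⟨by simpa using hne,
      ⟨Walk.cons (shell_adj_none i).symm (Walk.cons (shell_adj_none j) Walk.nil)⟩⟩
  have h1 : (shellGraph m).dist (some i) (some j) ≠ 1 := fun h =>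
    hnadj (shell_adj_some.mp (SimpleGraph.dist_eq_one_iff_adj.mp h))
  omega

lemma mem_shell_set {m : ℕ} {A : Finset (Fin m)} {u : Fin m} (hu : u ∈ A) :
    (some u : Option (Fin m)) ∈
      (insert (none : Option (Fin m)) (some '' (A : Set (Fin m)))) :=
  Set.mem_insert_iff.mpr (Or.inr ⟨u, hu, rfl⟩)

lemma key_lemma {m : ℕ} {A : Finset (Fin m)}
    (h : MutualVisibilitySet (shellGraph m)
      (insert (none : Option (Fin m)) (some '' (A : Set (Fin m)))))
    {u v : Fin m} (hu : u ∈ A) (hv : v ∈ A) (hne : u ≠ v) :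
    (SimpleGraph.pathGraph m).Adj u v ∨
      ∃ k, k ∉ A ∧ (SimpleGraph.pathGraph m).Adj u k ∧ (SimpleGraph.pathGraph m).Adj k v := by
  by_cases hadj : (SimpleGraph.pathGraph m).Adj u v
  · exact Or.inl hadj
  right
  obtain ⟨p, hp, hlen, hsup⟩ := h (some u) (mem_shell_set hu) (some v) (mem_shell_set hv)
  rw [shell_dist_some hne hadj] at hlen
  cases p with
  | nil => simp at hlen
  | cons h1 q =>
    cases q with
    | nil => simp at hlen
    | cons h2 r =>
      have hr : r.length = 0 := by
        simp only [Walk.length_cons] at hlen; omega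
      obtain rfl := (Walk.eq_of_length_eq_zero hr)
      rename_i b
      have hb1 : b ≠ some u := fun e => (shellGraph m).irrefl (e ▸ h1)
      have hb2 : b ≠ some v := fun e => (shellGraph m).irrefl (e ▸ h2)
      have hbS : b ∉ insert (none : Option (Fin m)) (some '' (A : Set (Fin m))) := by
        intro hmem
        rcases hsup b (by simp) hmem with e | e
        · exact hb1 e
        · exact hb2 e
      cases b with
      | none => exact absurd (Set.mem_insert _ _) hbS
      | some k =>
        exact ⟨k, fun hk => hbS (mem_shell_set hk), shell_adj_some.mp h1, shell_adj_some.mp h2⟩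

lemma no_three {m : ℕ} {A : Finset (Fin m)}
    (key : ∀ u ∈ A, ∀ v ∈ A, u ≠ v →
      (SimpleGraph.pathGraph m).Adj u v ∨
        ∃ k, k ∉ A ∧ (SimpleGraph.pathGraph m).Adj u k ∧ (SimpleGraph.pathGraph m).Adj k v)
    {a b c : Fin m} (hb : b ∈ A) (ha : a ∈ A) (hc : c ∈ A)
    (h1 : a < b) (h2 : b < c) : False := by
  have hab : a.val < b.val := h1
  have hbc : b.val < c.val := h2
  rcases key a ha c hc (Fin.ne_of_lt (h1.trans h2)) with hadj | ⟨k, hk, hk1, hk2⟩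
  · rw [SimpleGraph.pathGraph_adj] at hadj
    omega
  · rw [SimpleGraph.pathGraph_adj] at hk1 hk2
    have : k = b := Fin.ext (by omega)
    exact hk (this ▸ hb)

lemma xvis_of_adj {V : Type*} {G : SimpleGraph V} {X : Set V} {u v : V}
    (h : G.Adj u v) : XVisible G X u v := by
  refine ⟨Walk.cons h Walk.nil, ?_, ?_, ?_⟩
  · simp [Walk.cons_isPath_iff, h.ne]
  · simp [SimpleGraph.dist_eq_one_iff_adj.mpr h]
  · intro w hw _
    simpa using hw

lemma xvis_refl {V : Type*} {G : SimpleGraph V} {X : Set V} (u : V) : XVisible G X u u :=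
  ⟨Walk.nil, Walk.IsPath.nil, by simp [SimpleGraph.dist_self],
    fun w hw _ => Or.inl (by simpa using hw)⟩

lemma walk_length_two {V : Type*} {G : SimpleGraph V} {u v : V} (p : G.Walk u v)
    (h : p.length = 2) : ∃ k, G.Adj u k ∧ G.Adj k v := by
  cases p with
  | nil => simp at h
  | cons h1 q =>
    cases q with
    | nil => simp at h
    | cons h2 r =>
      have hr : r.length = 0 := by
        simp only [SimpleGraph.Walk.length_cons] at h; omega
      have e := SimpleGraph.Walk.eq_of_length_eq_zero hr
      subst e
      exact ⟨_, h1, h2⟩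

theorem shell_aux (m : ℕ) (A : Finset (Fin m)) :
    MutualVisibilitySet (shellGraph m)
      (insert (none : Option (Fin m)) (some '' (A : Set (Fin m)))) ↔
      A.card ≤ 2 ∧ ∀ u ∈ A, ∀ v ∈ A,
        (SimpleGraph.pathGraph m).dist u v ≤ 2 := by
  constructor
  · intro h
    have key : ∀ u ∈ A, ∀ v ∈ A, u ≠ v →
        (SimpleGraph.pathGraph m).Adj u v ∨
          ∃ k, k ∉ A ∧ (SimpleGraph.pathGraph m).Adj u k ∧ (SimpleGraph.pathGraph m).Adj k v :=
      fun u hu v hv hne => key_lemma h hu hv hne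
    constructor
    · by_contra hcard
      have h3 : 3 ≤ A.card := by omega
      set f := A.orderEmbOfCardLe h3 with hf
      have hlt1 : f 0 < f 1 := f.strictMono (by decide)
      have hlt2 : f 1 < f 2 := f.strictMono (by decide)
      exact no_three key (A.orderEmbOfCardLe_mem h3 1) (A.orderEmbOfCardLe_mem h3 0)
        (A.orderEmbOfCardLe_mem h3 2) hlt1 hlt2
    · intro u hu v hv
      rcases eq_or_ne u v with rfl | hne
      · simp [SimpleGraph.dist_self]
      rcases key u hu v hv hne with hadj | ⟨k, _, hk1, hk2⟩
      · have := SimpleGraph.dist_eq_one_iff_adj.mpr hadj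
        omega
      · simpa using SimpleGraph.dist_le (Walk.cons hk1 (Walk.cons hk2 Walk.nil))
  · rintro ⟨hcard, hdist⟩ u hu v hv
    rcases eq_or_ne u v with rfl | hne
    · exact xvis_refl u
    rcases Set.mem_insert_iff.mp hu with rfl | ⟨a, ha, rfl⟩
    · rcases Set.mem_insert_iff.mp hv with rfl | ⟨b, hb, rfl⟩
      · exact absurd rfl hne
      · exact xvis_of_adj (shell_adj_none b)
    rcases Set.mem_insert_iff.mp hv with rfl | ⟨b, hb, rfl⟩
    · exact xvis_of_adj (shell_adj_none a).symm
    have ha' : a ∈ A := ha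
    have hb' : b ∈ A := hb
    have hab : a ≠ b := fun e => hne (e ▸ rfl)
    by_cases hadj : (SimpleGraph.pathGraph m).Adj a b
    · exact xvis_of_adj (shell_adj_some.mpr hadj)
    have hd : (SimpleGraph.pathGraph m).dist a b ≤ 2 := hdist a ha' b hb'
    have h0 : (SimpleGraph.pathGraph m).dist a b ≠ 0 :=
      SimpleGraph.dist_ne_zero_iff_ne_and_reachable.mpr
        ⟨hab, SimpleGraph.pathGraph_preconnected m a b⟩
    have h1 : (SimpleGraph.pathGraph m).dist a b ≠ 1 := fun e =>
      hadj (SimpleGraph.dist_eq_one_iff_adj.mp e)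
    have h2 : (SimpleGraph.pathGraph m).dist a b = 2 := by omega
    obtain ⟨q, hq⟩ := SimpleGraph.exists_walk_of_dist_ne_zero h0
    rw [h2] at hq
    obtain ⟨k, g1, g2⟩ := walk_length_two q hq
    have hka : k ≠ a := g1.ne'
    have hkb : k ≠ b := g2.ne
    have hkA : k ∉ A := by
      intro hk
      have hsub : ({a, b, k} : Finset (Fin m)) ⊆ A := by
        intro x hx
        simp only [Finset.mem_insert, Finset.mem_singleton] at hx
        rcases hx with rfl | rfl | rfl <;> assumption
      have hcard3 : ({a, b, k} : Finset (Fin m)).card = 3 := by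
        rw [Finset.card_insert_of_notMem (by simp [hab, Ne.symm hka]),
          Finset.card_insert_of_notMem (by simp [Ne.symm hkb]),
          Finset.card_singleton]
      have := Finset.card_le_card hsub
      omega
    refine ⟨Walk.cons (shell_adj_some.mpr g1) (Walk.cons (shell_adj_some.mpr g2) Walk.nil),
      ?_, ?_, ?_⟩
    · simp only [Walk.cons_isPath_iff, Walk.isPath_iff_eq_nil, Walk.support_cons,
        Walk.support_nil, List.mem_cons, List.not_mem_nil, or_false]
      refine ⟨⟨trivial, fun e => hkb (by injection e)⟩, ?_⟩
      rintro (e | e)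
      · exact hka (Option.some_injective _ e).symm
      · exact hab (by injection e)
    · simp [shell_dist_some hab hadj]
    · intro w hw hwS
      simp only [Walk.support_cons, Walk.support_nil, List.mem_cons,
        List.not_mem_nil, or_false] at hw
      rcases hw with rfl | rfl | rfl
      · exact Or.inl rfl
      · exfalso
        rcases Set.mem_insert_iff.mp hwS with e | ⟨x, hx, hxe⟩
        · exact Option.some_ne_none k e
        · obtain rfl : x = k := by injection hxe
          exact hkA hx
      · exact Or.inr rfl

theorem shell_apex_mutualVisibility_iff (n : ℕ) (hn : 3 ≤ n)
    (A : Finset (Fin (n - 1))) :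
    MutualVisibilitySet (shellGraph (n - 1))
      (insert (none : Option (Fin (n - 1))) (some '' (A : Set (Fin (n - 1))))) ↔
      A.card ≤ 2 ∧ ∀ u ∈ A, ∀ v ∈ A,
        (SimpleGraph.pathGraph (n - 1)).dist u v ≤ 2 := by
  exact shell_aux (n - 1) A
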